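/- Applicability is undecidable for procedures with tgd constraints: there exist two fixed procedures P_1 and P_2, whose pre- and postconditions are tgds, such that it is undecidable, given a finite instance I, whether every instance in outcomes_{P_1}(I) satisfies the precondition tgd of P_2. -/

import Mathlib

/-- Domain of values. -/
abbrev Val := ℕ
/-- Variables. -/
abbrev Var := ℕ
/-- Relation names. -/
abbrev RelName := ℕ
/-- A relational instance assigns a set of tuples to each relation name. -/
abbrev Instance := RelName → Set (List Val)

/-- Instance extension (inclusion). -/
def Instance.le (I J : Instance) : Prop := ∀ R, I R ⊆ J R

/-- A relational atom `R(x₁,…,xₖ)`. -/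
structure Atom where
  rel : RelName
  args : List Var

/-- Satisfaction of an atom under an assignment. -/
def holdsAtom (I : Instance) (ν : Var → Val) (a : Atom) : Prop :=
  a.args.map ν ∈ I a.rel

/-- A tuple-generating dependency, given by its body and head conjunctions. -/
structure TGD where
  body : List Atom
  head : List Atom

/-- Variables occurring in the body of a tgd. -/
def TGD.bodyVar (t : TGD) (v : Var) : Prop := ∃ a ∈ t.body, v ∈ a.args

/-- Satisfaction of a tgd: every assignment satisfying the body extends to one
satisfying the head. -/
def satTGD (I : Instance) (t : TGD) : Prop :=
  ∀ ν : Var → Val, (∀ a ∈ t.body, holdsAtom I ν a) →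
    ∃ ν' : Var → Val, (∀ v, t.bodyVar v → ν' v = ν v) ∧ ∀ a ∈ t.head, holdsAtom I ν' a

/-- A full tgd has no existential variables in its head. -/
def FullTGD (t : TGD) : Prop := ∀ a ∈ t.head, ∀ v ∈ a.args, t.bodyVar v

/-- A set of tgds is acyclic: the relation-dependency graph (edge from a body
relation to a head relation) has no cycle, witnessed by a rank function. -/
def AcyclicTGDs (ts : List TGD) : Prop :=
  ∃ rank : RelName → ℕ, ∀ t ∈ ts, ∀ a ∈ t.body, ∀ b ∈ t.head, rank a.rel < rank b.rel

/-- Finiteness of an instance (finitely many facts overall). -/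
def FiniteInst (I : Instance) : Prop := {p : RelName × List Val | p.2 ∈ I p.1}.Finite

/-- Relations appearing in heads of a set of tgds (the scope of a safe-scope procedure). -/
def headRels (ts : List TGD) : Set RelName := { R | ∃ t ∈ ts, ∃ b ∈ t.head, b.rel = R }

/-- Outcomes of applying a procedure with safe scope (identified with its set of
postcondition tgds): extensions of `I` satisfying the tgds, where all relations
outside the scope (the head relations) are unchanged. -/
def safeOutcomes (ts : List TGD) (I : Instance) : Set Instance :=
  { J | Instance.le I J ∧ (∀ t ∈ ts, satTGD J t) ∧ ∀ R, R ∉ headRels ts → I R = J R }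

/-- Outcomes of a sequence of procedures with safe scope. -/
def safeSeqOutcomes : List (List TGD) → Instance → Set Instance
  | [], I => {I}
  | Γ :: rest, I => ⋃ J ∈ safeOutcomes Γ I, safeSeqOutcomes rest J

/-- A boolean conjunctive query: a conjunction of atoms, all variables existential. -/
abbrev BCQ := List Atom

/-- Satisfaction of a boolean conjunctive query. -/
def holdsBCQ (I : Instance) (q : BCQ) : Prop :=
  ∃ ν : Var → Val, ∀ a ∈ q, holdsAtom I ν a

/-- The set of instances represented by a scoped knowledge base `(I, Γ, Scope)`. -/
def repSKB (I : Instance) (Γ : List TGD) (Scope : Set RelName) : Set Instance :=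
  { J | Instance.le I J ∧ (∀ t ∈ Γ, satTGD J t) ∧ ∀ R, R ∉ Scope → I R = J R }

/-- Minimal members of a set of instances. -/
def MinimalIn (S : Set Instance) (J : Instance) : Prop :=
  J ∈ S ∧ ∀ K ∈ S, Instance.le K J → K = J

/-- The set of facts of an instance. -/
def tupleSet (I : Instance) : Set (RelName × List Val) := {p | p.2 ∈ I p.1}

/-- Encoding of finite instances as lists of facts (for computability). -/
abbrev FinInst := List (RelName × List Val)

/-- The instance encoded by a list of facts. -/
def toInstance (L : FinInst) : Instance := fun R => { t | (R, t) ∈ L }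

/-- A conjunctive query with free variables. -/
structure CQuery where
  free : List Var
  body : List Atom

/-- Answers of a conjunctive query over an instance. -/
def answers (q : CQuery) (I : Instance) : Set (List Val) :=
  { l | ∃ ν : Var → Val, (∀ a ∈ q.body, holdsAtom I ν a) ∧ l = q.free.map ν }

/-- A procedure whose pre- and postconditions are tgds, with a scope and
preservation queries. -/
structure Proc where
  scope : Set RelName
  pre : List TGD
  post : List TGD
  pres : List CQuery

/-- Possible outcomes of applying a procedure: the preconditions hold on `I`,
the postconditions hold on the outcome, out-of-scope relations are unchanged
and answers to the preservation queries are preserved. -/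
def procOutcomes (P : Proc) (I : Instance) : Set Instance :=
  { J | (∀ t ∈ P.pre, satTGD I t) ∧ (∀ t ∈ P.post, satTGD J t) ∧
        (∀ R, R ∉ P.scope → I R = J R) ∧ ∀ q ∈ P.pres, answers q I ⊆ answers q J }



open Nat.Partrec Code Denumerable

namespace Und

/-- atom -/
def A (R : RelName) (args : List Var) : Atom := ⟨R, args⟩

-- Relation names:
-- 0 Z, 1 S, 2 N, 3 Le, 4 Lt, 5 Add, 6 Mul, 7 Pair, 8 Cd,
-- 9 C0, 10 C1, 11 C2, 12 C3, 13 CPair, 14 CComp, 15 CPrec, 16 CRfind,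
-- 17 CTop, 18 E, 19 H

def rN0 : TGD := ⟨[A 0 [0]], [A 2 [0]]⟩
def rN1 : TGD := ⟨[A 1 [0,1]], [A 2 [0], A 2 [1]]⟩
def rS : TGD := ⟨[A 2 [0]], [A 1 [0,1], A 2 [1]]⟩
def rLt0 : TGD := ⟨[A 1 [0,1]], [A 4 [0,1]]⟩
def rLt1 : TGD := ⟨[A 4 [0,1], A 1 [1,2]], [A 4 [0,2]]⟩
def rLe0 : TGD := ⟨[A 2 [0]], [A 3 [0,0]]⟩
def rLe1 : TGD := ⟨[A 4 [0,1]], [A 3 [0,1]]⟩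
def rAdd0 : TGD := ⟨[A 2 [0], A 0 [1]], [A 5 [0,1,0]]⟩
def rAdd1 : TGD := ⟨[A 5 [0,1,2], A 1 [1,3], A 1 [2,4]], [A 5 [0,3,4]]⟩
def rMul0 : TGD := ⟨[A 2 [0], A 0 [1]], [A 6 [0,1,1]]⟩
def rMul1 : TGD := ⟨[A 6 [0,1,2], A 1 [1,3], A 5 [2,0,4]], [A 6 [0,3,4]]⟩
def rPairLt : TGD := ⟨[A 4 [0,1], A 6 [1,1,2], A 5 [2,0,3]], [A 7 [0,1,3]]⟩
def rPairGe : TGD := ⟨[A 3 [1,0], A 6 [0,0,2], A 5 [2,0,3], A 5 [3,1,4]], [A 7 [0,1,4]]⟩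
def rTop : TGD := ⟨[A 17 [0]], [A 8 [0]]⟩
def rC0 : TGD := ⟨[A 8 [0], A 0 [0]], [A 9 [0]]⟩
def rC1 : TGD := ⟨[A 8 [0], A 0 [1], A 1 [1,0]], [A 10 [0]]⟩
def rC2 : TGD := ⟨[A 8 [0], A 0 [1], A 1 [1,2], A 1 [2,0]], [A 11 [0]]⟩
def rC3 : TGD := ⟨[A 8 [0], A 0 [1], A 1 [1,2], A 1 [2,3], A 1 [3,0]], [A 12 [0]]⟩
-- e = 4p+4 : pair
def rDPair : TGD := ⟨[A 8 [0], A 7 [1,2,3], A 5 [3,3,4], A 5 [4,4,5],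
    A 1 [5,6], A 1 [6,7], A 1 [7,8], A 1 [8,0]],
  [A 13 [0,1,2], A 8 [1], A 8 [2]]⟩
-- e = 4p+6 : comp
def rDComp : TGD := ⟨[A 8 [0], A 7 [1,2,3], A 5 [3,3,4], A 5 [4,4,5],
    A 1 [5,6], A 1 [6,7], A 1 [7,8], A 1 [8,9], A 1 [9,10], A 1 [10,0]],
  [A 14 [0,1,2], A 8 [1], A 8 [2]]⟩
-- e = 4p+5 : prec
def rDPrec : TGD := ⟨[A 8 [0], A 7 [1,2,3], A 5 [3,3,4], A 5 [4,4,5],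
    A 1 [5,6], A 1 [6,7], A 1 [7,8], A 1 [8,9], A 1 [9,0]],
  [A 15 [0,1,2], A 8 [1], A 8 [2]]⟩
-- e = 4q+7 : rfind'
def rDRfind : TGD := ⟨[A 8 [0], A 2 [1], A 5 [1,1,4], A 5 [4,4,5],
    A 1 [5,6], A 1 [6,7], A 1 [7,8], A 1 [8,9], A 1 [9,10], A 1 [10,11], A 1 [11,0]],
  [A 16 [0,1], A 8 [1]]⟩
-- E rules. vars: e=0 f=1 g=2 k=3 k'=4 n=5
def rEZero : TGD := ⟨[A 9 [0], A 1 [3,4], A 3 [5,3], A 0 [6]], [A 18 [4,0,5,6]]⟩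
def rESucc : TGD := ⟨[A 10 [0], A 1 [3,4], A 3 [5,3], A 1 [5,6]], [A 18 [4,0,5,6]]⟩
def rELeft : TGD := ⟨[A 11 [0], A 1 [3,4], A 3 [5,3], A 7 [6,7,5]], [A 18 [4,0,5,6]]⟩
def rERight : TGD := ⟨[A 12 [0], A 1 [3,4], A 3 [5,3], A 7 [6,7,5]], [A 18 [4,0,5,7]]⟩
def rEPair : TGD := ⟨[A 13 [0,1,2], A 1 [3,4], A 3 [5,3],
    A 18 [4,1,5,6], A 18 [4,2,5,7], A 7 [6,7,8]], [A 18 [4,0,5,8]]⟩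
def rEComp : TGD := ⟨[A 14 [0,1,2], A 1 [3,4], A 3 [5,3],
    A 18 [4,2,5,6], A 18 [4,1,6,7]], [A 18 [4,0,5,7]]⟩
def rEPrec0 : TGD := ⟨[A 15 [0,1,2], A 1 [3,4], A 3 [5,3], A 0 [6],
    A 7 [7,6,5], A 18 [4,1,7,8]], [A 18 [4,0,5,8]]⟩
def rEPrec1 : TGD := ⟨[A 15 [0,1,2], A 1 [3,4], A 3 [5,3], A 1 [6,7],
    A 7 [8,7,5], A 7 [8,6,9], A 18 [3,0,9,10], A 7 [6,10,11], A 7 [8,11,12],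
    A 18 [4,2,12,13]], [A 18 [4,0,5,13]]⟩
def rERf0 : TGD := ⟨[A 16 [0,1], A 1 [3,4], A 3 [5,3], A 0 [6],
    A 18 [4,1,5,6], A 7 [7,8,5]], [A 18 [4,0,5,8]]⟩
def rERf1 : TGD := ⟨[A 16 [0,1], A 1 [3,4], A 3 [5,3], A 1 [6,7],
    A 18 [4,1,5,7], A 7 [8,9,5], A 1 [9,10], A 7 [8,10,11], A 18 [3,0,11,12]],
  [A 18 [4,0,5,12]]⟩
def rH : TGD := ⟨[A 17 [0], A 0 [1], A 18 [2,0,1,3]], [A 19 []]⟩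

def rules : List TGD := [rN0, rN1, rS, rLt0, rLt1, rLe0, rLe1, rAdd0, rAdd1,
  rMul0, rMul1, rPairLt, rPairGe, rTop, rC0, rC1, rC2, rC3,
  rDPair, rDComp, rDPrec, rDRfind,
  rEZero, rESucc, rELeft, rERight, rEPair, rEComp, rEPrec0, rEPrec1, rERf0, rERf1, rH]

def qZ : CQuery := ⟨[0], [A 0 [0]]⟩
def qS : CQuery := ⟨[0,1], [A 1 [0,1]]⟩
def qT : CQuery := ⟨[0], [A 17 [0]]⟩

def P1 : Proc := ⟨Set.univ, [], rules, [qZ, qS, qT]⟩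
def P2 : Proc := ⟨∅, [⟨[], [A 19 []]⟩], [], []⟩

def encF (N : ℕ) : FinInst :=
  (0, [0]) :: (17, [N]) :: (List.range N).map (fun i => (1, [i, i+1]))

-- helpers
lemma applyR {J : Instance} {t : TGD} (ht : satTGD J t) (hfull : FullTGD t)
    (ν : Var → Val) (hb : ∀ a ∈ t.body, holdsAtom J ν a) :
    ∀ a ∈ t.head, holdsAtom J ν a := by
  obtain ⟨ν', hagree, hh⟩ := ht ν hb
  intro a ha
  have h := hh a ha
  unfold holdsAtom at h ⊢
  have heq : a.args.map ν' = a.args.map ν :=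
    List.map_congr_left (fun v hv => hagree v (hfull a ha v hv))
  rwa [heq] at h

lemma fm0 {P : Atom → Prop} : ∀ a ∈ ([] : List Atom), P a :=
  fun a ha => absurd ha (List.not_mem_nil)
lemma fmc {x : Atom} {l : List Atom} {P : Atom → Prop} (h : P x) (h' : ∀ a ∈ l, P a) :
    ∀ a ∈ x :: l, P a := List.forall_mem_cons.2 ⟨h, h'⟩

instance (t : TGD) (v : Var) : Decidable (t.bodyVar v) := by
  unfold TGD.bodyVar; infer_instance
instance (t : TGD) : Decidable (FullTGD t) := by
  unfold FullTGD; infer_instance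

example : FullTGD rEPrec1 := by decide
example : rEPrec1 ∈ rules := by simp [rules]

end Und

open Nat.Partrec Code Denumerable

lemma failure_none {α} : (failure : Option α) = Option.none := rfl

lemma evaln_zero' (k n m) : evaln (k+1) Code.zero n = some m ↔ n ≤ k ∧ m = 0 := by
  by_cases h : n ≤ k <;> simp [evaln, h, guard, failure_none, eq_comm]

lemma evaln_succ' (k n m) : evaln (k+1) Code.succ n = some m ↔ n ≤ k ∧ m = n + 1 := by
  by_cases h : n ≤ k <;> simp [evaln, h, guard, failure_none, eq_comm]

lemma evaln_left' (k n m) : evaln (k+1) Code.left n = some m ↔ n ≤ k ∧ m = n.unpair.1 := by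
  by_cases h : n ≤ k <;> simp [evaln, h, guard, failure_none, eq_comm]

lemma evaln_right' (k n m) : evaln (k+1) Code.right n = some m ↔ n ≤ k ∧ m = n.unpair.2 := by
  by_cases h : n ≤ k <;> simp [evaln, h, guard, failure_none, eq_comm]

lemma evaln_pair' (k cf cg n m) : evaln (k+1) (Code.pair cf cg) n = some m ↔
    n ≤ k ∧ ∃ a b, evaln (k+1) cf n = some a ∧ evaln (k+1) cg n = some b ∧ m = Nat.pair a b := by
  by_cases h : n ≤ k
  · rcases hf : evaln (k+1) cf n with _ | a <;> rcases hg : evaln (k+1) cg n with _ | b <;>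
      simp [evaln, h, hf, hg, guard, failure_none, Seq.seq, eq_comm]
  · simp [evaln, h, guard, failure_none, Seq.seq]

lemma evaln_comp' (k cf cg n m) : evaln (k+1) (Code.comp cf cg) n = some m ↔
    n ≤ k ∧ ∃ a, evaln (k+1) cg n = some a ∧ evaln (k+1) cf a = some m := by
  by_cases h : n ≤ k
  · rcases hg : evaln (k+1) cg n with _ | a <;>
      simp [evaln, h, hg, guard, failure_none, eq_comm]
  · simp [evaln, h, guard, failure_none]

lemma evaln_prec' (k cf cg n m) : evaln (k+1) (Code.prec cf cg) n = some m ↔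
    n ≤ k ∧ ((n.unpair.2 = 0 ∧ evaln (k+1) cf n.unpair.1 = some m) ∨
      (∃ m₀ i, n.unpair.2 = m₀ + 1 ∧ evaln k (Code.prec cf cg) (Nat.pair n.unpair.1 m₀) = some i ∧
        evaln (k+1) cg (Nat.pair n.unpair.1 (Nat.pair m₀ i)) = some m)) := by
  by_cases h : n ≤ k
  · rcases hn : n.unpair.2 with _ | m₀
    · simp [evaln, h, hn, guard, failure_none, Nat.unpaired, eq_comm]
    · rcases hi : evaln k (Code.prec cf cg) (Nat.pair n.unpair.1 m₀) with _ | i <;>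
        simp [evaln, h, hn, hi, guard, failure_none, Nat.unpaired, eq_comm]
  · simp [evaln, h, guard, failure_none, Nat.unpaired]

lemma evaln_rfind'' (k cf n m) : evaln (k+1) (Code.rfind' cf) n = some m ↔
    n ≤ k ∧ ∃ v, evaln (k+1) cf n = some v ∧
      ((v = 0 ∧ m = n.unpair.2) ∨
       (v ≠ 0 ∧ evaln k (Code.rfind' cf) (Nat.pair n.unpair.1 (n.unpair.2 + 1)) = some m)) := by
  by_cases h : n ≤ k
  · rcases hv : evaln (k+1) cf n with _ | v
    · simp [evaln, h, hv, guard, failure_none, Nat.unpaired, Nat.pair_unpair, eq_comm]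
    · by_cases h0 : v = 0 <;>
        simp [evaln, h, hv, h0, guard, failure_none, Nat.unpaired, Nat.pair_unpair, eq_comm]
  · simp [evaln, h, guard, failure_none, Nat.unpaired]

namespace Und

lemma chain_exists (J : Instance) (N : ℕ)
    (hlit : ∀ i ≤ N, [(i : Val)] ∈ J 2)
    (hnext : ∀ v, [v] ∈ J 2 → ∃ w, [v, w] ∈ J 1 ∧ [w] ∈ J 2)
    (hSlit : ∀ i < N, [(i : Val), i+1] ∈ J 1) :
    ∃ x : ℕ → Val, x 0 = 0 ∧ (∀ i ≤ N, x i = i) ∧ (∀ i, [x i] ∈ J 2) ∧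
      (∀ i, [x i, x (i+1)] ∈ J 1) := by
  have h0 : [(0 : Val)] ∈ J 2 := hlit 0 (Nat.zero_le _)
  let f : ℕ → {v : Val // [v] ∈ J 2} := fun i =>
    Nat.rec ⟨0, h0⟩
      (fun i p =>
        if h : i + 1 ≤ N then ⟨i+1, hlit _ h⟩
        else ⟨Classical.choose (hnext p.1 p.2), (Classical.choose_spec (hnext p.1 p.2)).2⟩) i
  have hf0 : f 0 = ⟨0, h0⟩ := rfl
  have hfs : ∀ i, f (i+1) = if h : i + 1 ≤ N then ⟨i+1, hlit _ h⟩
      else ⟨Classical.choose (hnext (f i).1 (f i).2),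
        (Classical.choose_spec (hnext (f i).1 (f i).2)).2⟩ := fun i => rfl
  refine ⟨fun i => (f i).1, rfl, ?_, fun i => (f i).2, ?_⟩
  · intro i hi
    induction i with
    | zero => rfl
    | succ i ih =>
      show (f (i+1)).1 = (i+1 : ℕ)
      rw [hfs i, dif_pos hi]
  · intro i
    show [(f i).1, (f (i+1)).1] ∈ J 1
    by_cases h : i + 1 ≤ N
    · have hi : (f i).1 = i := by
        cases i with
        | zero => rfl
        | succ j => rw [hfs j, dif_pos (le_of_lt h)]
      rw [hfs i, dif_pos h, hi]
      exact hSlit i h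
    · rw [hfs i, dif_neg h]
      exact (Classical.choose_spec (hnext (f i).1 (f i).2)).1

end Und

namespace Und

open Nat.Partrec Code

theorem sound (cd : Code) (J : Instance)
    (hZJ : [(0:Val)] ∈ J 0)
    (hSJ : ∀ i, i < encodeCode cd → [(i:Val), i+1] ∈ J 1)
    (hTJ : [(encodeCode cd : Val)] ∈ J 17)
    (hs : ∀ t ∈ rules, satTGD J t)
    (hd : (eval cd 0).Dom) : [] ∈ J 19 := by
  -- numerals up to N are in N-relation
  have hNlit : ∀ i, i ≤ encodeCode cd → [(i : Val)] ∈ J 2 := by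
    intro i hi
    induction i with
    | zero =>
      exact (applyR (hs rN0 (by simp [rules])) (by decide) (fun _ => 0)
        (fmc hZJ fm0)) _ (List.mem_cons_self)
    | succ i ih =>
      exact (applyR (hs rN1 (by simp [rules])) (by decide)
        (fun v => match v with | 0 => (i:Val) | _ => (i+1:Val))
        (fmc (hSJ i hi) fm0)) _ (List.mem_cons_of_mem _ (List.mem_cons_self))
  have hnext : ∀ v, [v] ∈ J 2 → ∃ w, [v,w] ∈ J 1 ∧ [w] ∈ J 2 := by
    intro v hv
    obtain ⟨ν', hag, hh⟩ := hs rS (by simp [rules]) (fun _ => v) (fmc hv fm0)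
    have h1 : ν' 0 = v := hag 0 (by decide)
    refine ⟨ν' 1, ?_, ?_⟩
    · have h2 := hh _ (List.mem_cons_self)
      simp only [holdsAtom, A, List.map_cons, List.map_nil] at h2
      rwa [h1] at h2
    · have h3 := hh _ (List.mem_cons_of_mem _ (List.mem_cons_self))
      simpa only [holdsAtom, A, List.map_cons, List.map_nil] using h3
  obtain ⟨x, hx0, hxlit, hxN, hxS⟩ :=
    chain_exists J (encodeCode cd) hNlit hnext (fun i hi => hSJ i hi)
  have hZ0 : [x 0] ∈ J 0 := by rw [hx0]; exact hZJ
  have hLt : ∀ a b : ℕ, a < b → [x a, x b] ∈ J 4 := by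
    intro a b hab
    obtain ⟨k, rfl⟩ : ∃ k, b = (a+1)+k := ⟨b - (a+1), by omega⟩
    clear hab
    induction k with
    | zero =>
      exact (applyR (hs rLt0 (by simp [rules])) (by decide)
        (fun v => match v with | 0 => x a | _ => x (a+1)) (fmc (hxS a) fm0)) _
        (List.mem_cons_self)
    | succ k ih =>
      exact (applyR (hs rLt1 (by simp [rules])) (by decide)
        (fun v => match v with | 0 => x a | 1 => x (a+1+k) | _ => x (a+1+k+1))
        (fmc ih (fmc (hxS (a+1+k)) fm0))) _ (List.mem_cons_self)
  have hLe : ∀ a b : ℕ, a ≤ b → [x a, x b] ∈ J 3 := by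
    intro a b hab
    rcases Nat.lt_or_ge a b with h | h
    · exact (applyR (hs rLe1 (by simp [rules])) (by decide)
        (fun v => match v with | 0 => x a | _ => x b) (fmc (hLt a b h) fm0)) _
        (List.mem_cons_self)
    · have hab' : a = b := le_antisymm hab h
      subst hab'
      exact (applyR (hs rLe0 (by simp [rules])) (by decide)
        (fun _ => x a) (fmc (hxN a) fm0)) _ (List.mem_cons_self)
  have hAdd : ∀ a b : ℕ, [x a, x b, x (a+b)] ∈ J 5 := by
    intro a b
    induction b with
    | zero =>
      exact (applyR (hs rAdd0 (by simp [rules])) (by decide)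
        (fun v => match v with | 0 => x a | _ => x 0)
        (fmc (hxN a) (fmc hZ0 fm0))) _ (List.mem_cons_self)
    | succ b ih =>
      exact (applyR (hs rAdd1 (by simp [rules])) (by decide)
        (fun v => match v with | 0 => x a | 1 => x b | 2 => x (a+b) | 3 => x (b+1) | _ => x (a+b+1))
        (fmc ih (fmc (hxS b) (fmc (hxS (a+b)) fm0)))) _ (List.mem_cons_self)
  have hMul : ∀ a b : ℕ, [x a, x b, x (a*b)] ∈ J 6 := by
    intro a b
    induction b with
    | zero =>
      exact (applyR (hs rMul0 (by simp [rules])) (by decide)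
        (fun v => match v with | 0 => x a | _ => x 0)
        (fmc (hxN a) (fmc hZ0 fm0))) _ (List.mem_cons_self)
    | succ b ih =>
      exact (applyR (hs rMul1 (by simp [rules])) (by decide)
        (fun v => match v with | 0 => x a | 1 => x b | 2 => x (a*b) | 3 => x (b+1) | _ => x (a*b+a))
        (fmc ih (fmc (hxS b) (fmc (hAdd (a*b) a) fm0)))) _ (List.mem_cons_self)
  have hPair : ∀ a b : ℕ, [x a, x b, x (Nat.pair a b)] ∈ J 7 := by
    intro a b
    by_cases h : a < b
    · have happ := (applyR (hs rPairLt (by simp [rules])) (by decide)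
        (fun v => match v with | 0 => x a | 1 => x b | 2 => x (b*b) | _ => x (b*b+a))
        (fmc (hLt a b h) (fmc (hMul b b) (fmc (hAdd (b*b) a) fm0)))) _
        (List.mem_cons_self)
      have hp : Nat.pair a b = b*b+a := by unfold Nat.pair; rw [if_pos h]
      rw [hp]
      exact happ
    · have happ := (applyR (hs rPairGe (by simp [rules])) (by decide)
        (fun v => match v with | 0 => x a | 1 => x b | 2 => x (a*a) | 3 => x (a*a+a) | _ => x (a*a+a+b))
        (fmc (hLe b a (le_of_not_gt h)) (fmc (hMul a a) (fmc (hAdd (a*a) a)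
          (fmc (hAdd (a*a+a) b) fm0))))) _ (List.mem_cons_self)
      have hp : Nat.pair a b = a*a+a+b := by unfold Nat.pair; rw [if_neg h]
      rw [hp]
      exact happ
  have hCdTop : [x (encodeCode cd)] ∈ J 8 := by
    have hT' : [x (encodeCode cd)] ∈ J 17 := by rw [hxlit _ le_rfl]; exact hTJ
    exact (applyR (hs rTop (by simp [rules])) (by decide)
      (fun _ => x (encodeCode cd)) (fmc hT' fm0)) _ (List.mem_cons_self)
  -- structural decomposition lemmas
  have keyPair : ∀ p f g : ℕ, Nat.pair f g = p → [x (p+p+(p+p)+1+1+1+1)] ∈ J 8 →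
      [x (p+p+(p+p)+1+1+1+1), x f, x g] ∈ J 13 ∧ [x f] ∈ J 8 ∧ [x g] ∈ J 8 := by
    intro p f g hp hc
    have hP' : [x f, x g, x p] ∈ J 7 := by rw [← hp]; exact hPair f g
    have happ := applyR (hs rDPair (by simp [rules])) (by decide)
      (fun v => match v with | 0 => x (p+p+(p+p)+1+1+1+1) | 1 => x f | 2 => x g | 3 => x p | 4 => x (p+p) | 5 => x (p+p+(p+p)) | 6 => x (p+p+(p+p)+1) | 7 => x (p+p+(p+p)+1+1) | _ => x (p+p+(p+p)+1+1+1))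
      (fmc hc (fmc hP' (fmc (hAdd p p) (fmc (hAdd (p+p) (p+p))
        (fmc (hxS _) (fmc (hxS _) (fmc (hxS _) (fmc (hxS _) fm0))))))))
    exact ⟨happ _ (List.mem_cons_self),
      happ _ (List.mem_cons_of_mem _ (List.mem_cons_self)),
      happ _ (List.mem_cons_of_mem _ (List.mem_cons_of_mem _ (List.mem_cons_self)))⟩
  have keyComp : ∀ p f g : ℕ, Nat.pair f g = p → [x (p+p+(p+p)+1+1+1+1+1+1)] ∈ J 8 →
      [x (p+p+(p+p)+1+1+1+1+1+1), x f, x g] ∈ J 14 ∧ [x f] ∈ J 8 ∧ [x g] ∈ J 8 := by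
    intro p f g hp hc
    have hP' : [x f, x g, x p] ∈ J 7 := by rw [← hp]; exact hPair f g
    have happ := applyR (hs rDComp (by simp [rules])) (by decide)
      (fun v => match v with | 0 => x (p+p+(p+p)+1+1+1+1+1+1) | 1 => x f | 2 => x g | 3 => x p | 4 => x (p+p) | 5 => x (p+p+(p+p)) | 6 => x (p+p+(p+p)+1) | 7 => x (p+p+(p+p)+1+1) | 8 => x (p+p+(p+p)+1+1+1) | 9 => x (p+p+(p+p)+1+1+1+1) | _ => x (p+p+(p+p)+1+1+1+1+1))
      (fmc hc (fmc hP' (fmc (hAdd p p) (fmc (hAdd (p+p) (p+p))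
        (fmc (hxS _) (fmc (hxS _) (fmc (hxS _) (fmc (hxS _) (fmc (hxS _) (fmc (hxS _) fm0))))))))))
    exact ⟨happ _ (List.mem_cons_self),
      happ _ (List.mem_cons_of_mem _ (List.mem_cons_self)),
      happ _ (List.mem_cons_of_mem _ (List.mem_cons_of_mem _ (List.mem_cons_self)))⟩
  have keyPrec : ∀ p f g : ℕ, Nat.pair f g = p → [x (p+p+(p+p)+1+1+1+1+1)] ∈ J 8 →
      [x (p+p+(p+p)+1+1+1+1+1), x f, x g] ∈ J 15 ∧ [x f] ∈ J 8 ∧ [x g] ∈ J 8 := by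
    intro p f g hp hc
    have hP' : [x f, x g, x p] ∈ J 7 := by rw [← hp]; exact hPair f g
    have happ := applyR (hs rDPrec (by simp [rules])) (by decide)
      (fun v => match v with | 0 => x (p+p+(p+p)+1+1+1+1+1) | 1 => x f | 2 => x g | 3 => x p | 4 => x (p+p) | 5 => x (p+p+(p+p)) | 6 => x (p+p+(p+p)+1) | 7 => x (p+p+(p+p)+1+1) | 8 => x (p+p+(p+p)+1+1+1) | _ => x (p+p+(p+p)+1+1+1+1))
      (fmc hc (fmc hP' (fmc (hAdd p p) (fmc (hAdd (p+p) (p+p))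
        (fmc (hxS _) (fmc (hxS _) (fmc (hxS _) (fmc (hxS _) (fmc (hxS _) fm0)))))))))
    exact ⟨happ _ (List.mem_cons_self),
      happ _ (List.mem_cons_of_mem _ (List.mem_cons_self)),
      happ _ (List.mem_cons_of_mem _ (List.mem_cons_of_mem _ (List.mem_cons_self)))⟩
  have keyRfind : ∀ f : ℕ, [x (f+f+(f+f)+1+1+1+1+1+1+1)] ∈ J 8 →
      [x (f+f+(f+f)+1+1+1+1+1+1+1), x f] ∈ J 16 ∧ [x f] ∈ J 8 := by
    intro f hc
    have happ := applyR (hs rDRfind (by simp [rules])) (by decide)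
      (fun v => match v with | 0 => x (f+f+(f+f)+1+1+1+1+1+1+1) | 1 => x f | 4 => x (f+f) | 5 => x (f+f+(f+f)) | 6 => x (f+f+(f+f)+1) | 7 => x (f+f+(f+f)+1+1) | 8 => x (f+f+(f+f)+1+1+1) | 9 => x (f+f+(f+f)+1+1+1+1) | 10 => x (f+f+(f+f)+1+1+1+1+1) | _ => x (f+f+(f+f)+1+1+1+1+1+1))
      (fmc hc (fmc (hxN f) (fmc (hAdd f f) (fmc (hAdd (f+f) (f+f))
        (fmc (hxS _) (fmc (hxS _) (fmc (hxS _) (fmc (hxS _) (fmc (hxS _) (fmc (hxS _)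
          (fmc (hxS _) fm0)))))))))))
    exact ⟨happ _ (List.mem_cons_self),
      happ _ (List.mem_cons_of_mem _ (List.mem_cons_self))⟩
  have hE : ∀ k (c : Code) (n m : ℕ), [x (encodeCode c)] ∈ J 8 →
      evaln k c n = some m → [x k, x (encodeCode c), x n, x m] ∈ J 18 := by
    intro k
    induction k with
    | zero => intro c n m _ h; exact absurd h (by simp [evaln])
    | succ k IHk =>
      intro c
      induction c with
      | zero =>
        intro n m hc h
        rw [evaln_zero'] at h
        obtain ⟨hnk, rfl⟩ := h
        have hC : [x 0] ∈ J 9 := (applyR (hs rC0 (by simp [rules])) (by decide)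
          (fun _ => x 0) (fmc hc (fmc hZ0 fm0))) _ (List.mem_cons_self)
        exact (applyR (hs rEZero (by simp [rules])) (by decide)
          (fun v => match v with | 0 => x 0 | 3 => x k | 4 => x (k+1) | 5 => x n | _ => x 0)
          (fmc hC (fmc (hxS k) (fmc (hLe n k hnk) (fmc hZ0 fm0))))) _
          (List.mem_cons_self)
      | succ =>
        intro n m hc h
        rw [evaln_succ'] at h
        obtain ⟨hnk, rfl⟩ := h
        have hC : [x 1] ∈ J 10 := (applyR (hs rC1 (by simp [rules])) (by decide)
          (fun v => match v with | 0 => x 1 | _ => x 0)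
          (fmc hc (fmc hZ0 (fmc (hxS 0) fm0)))) _ (List.mem_cons_self)
        exact (applyR (hs rESucc (by simp [rules])) (by decide)
          (fun v => match v with | 0 => x 1 | 3 => x k | 4 => x (k+1) | 5 => x n | 6 => x (n+1) | _ => x 0)
          (fmc hC (fmc (hxS k) (fmc (hLe n k hnk) (fmc (hxS n) fm0))))) _
          (List.mem_cons_self)
      | left =>
        intro n m hc h
        rw [evaln_left'] at h
        obtain ⟨hnk, rfl⟩ := h
        have hC : [x 2] ∈ J 11 := (applyR (hs rC2 (by simp [rules])) (by decide)
          (fun v => match v with | 0 => x 2 | 1 => x 0 | _ => x 1)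
          (fmc hc (fmc hZ0 (fmc (hxS 0) (fmc (hxS 1) fm0))))) _ (List.mem_cons_self)
        have hup : [x n.unpair.1, x n.unpair.2, x n] ∈ J 7 := by
          have := hPair n.unpair.1 n.unpair.2
          rwa [Nat.pair_unpair] at this
        exact (applyR (hs rELeft (by simp [rules])) (by decide)
          (fun v => match v with | 0 => x 2 | 3 => x k | 4 => x (k+1) | 5 => x n | 6 => x n.unpair.1 | _ => x n.unpair.2)
          (fmc hC (fmc (hxS k) (fmc (hLe n k hnk) (fmc hup fm0))))) _
          (List.mem_cons_self)
      | right =>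
        intro n m hc h
        rw [evaln_right'] at h
        obtain ⟨hnk, rfl⟩ := h
        have hC : [x 3] ∈ J 12 := (applyR (hs rC3 (by simp [rules])) (by decide)
          (fun v => match v with | 0 => x 3 | 1 => x 0 | 2 => x 1 | _ => x 2)
          (fmc hc (fmc hZ0 (fmc (hxS 0) (fmc (hxS 1) (fmc (hxS 2) fm0)))))) _
          (List.mem_cons_self)
        have hup : [x n.unpair.1, x n.unpair.2, x n] ∈ J 7 := by
          have := hPair n.unpair.1 n.unpair.2
          rwa [Nat.pair_unpair] at this
        exact (applyR (hs rERight (by simp [rules])) (by decide)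
          (fun v => match v with | 0 => x 3 | 3 => x k | 4 => x (k+1) | 5 => x n | 6 => x n.unpair.1 | _ => x n.unpair.2)
          (fmc hC (fmc (hxS k) (fmc (hLe n k hnk) (fmc hup fm0))))) _
          (List.mem_cons_self)
      | pair cf cg IHf IHg =>
        intro n m hc h
        rw [evaln_pair'] at h
        obtain ⟨hnk, a, b, hf, hg, rfl⟩ := h
        have e1 : encodeCode (Code.pair cf cg) =
            Nat.pair (encodeCode cf) (encodeCode cg) + Nat.pair (encodeCode cf) (encodeCode cg) +
            (Nat.pair (encodeCode cf) (encodeCode cg) + Nat.pair (encodeCode cf) (encodeCode cg)) + 1+1+1+1 := by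
          show 2 * (2 * Nat.pair (encodeCode cf) (encodeCode cg)) + 4 = _
          omega
        have hc' := hc
        rw [e1] at hc'
        obtain ⟨h13, hcf, hcg⟩ := keyPair _ _ _ rfl hc'
        rw [← e1] at h13
        exact (applyR (hs rEPair (by simp [rules])) (by decide)
          (fun v => match v with | 0 => x (encodeCode (Code.pair cf cg)) | 1 => x (encodeCode cf) | 2 => x (encodeCode cg) | 3 => x k | 4 => x (k+1) | 5 => x n | 6 => x a | 7 => x b | _ => x (Nat.pair a b))
          (fmc h13 (fmc (hxS k) (fmc (hLe n k hnk)
            (fmc (IHf n a hcf hf) (fmc (IHg n b hcg hg) (fmc (hPair a b) fm0))))))) _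
          (List.mem_cons_self)
      | comp cf cg IHf IHg =>
        intro n m hc h
        rw [evaln_comp'] at h
        obtain ⟨hnk, a, hg, hf⟩ := h
        have e1 : encodeCode (Code.comp cf cg) =
            Nat.pair (encodeCode cf) (encodeCode cg) + Nat.pair (encodeCode cf) (encodeCode cg) +
            (Nat.pair (encodeCode cf) (encodeCode cg) + Nat.pair (encodeCode cf) (encodeCode cg)) + 1+1+1+1+1+1 := by
          show 2 * (2 * Nat.pair (encodeCode cf) (encodeCode cg) + 1) + 4 = _
          omega
        have hc' := hc
        rw [e1] at hc'
        obtain ⟨h14, hcf, hcg⟩ := keyComp _ _ _ rfl hc'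
        rw [← e1] at h14
        exact (applyR (hs rEComp (by simp [rules])) (by decide)
          (fun v => match v with | 0 => x (encodeCode (Code.comp cf cg)) | 1 => x (encodeCode cf) | 2 => x (encodeCode cg) | 3 => x k | 4 => x (k+1) | 5 => x n | 6 => x a | _ => x m)
          (fmc h14 (fmc (hxS k) (fmc (hLe n k hnk)
            (fmc (IHg n a hcg hg) (fmc (IHf a m hcf hf) fm0)))))) _
          (List.mem_cons_self)
      | prec cf cg IHf IHg =>
        intro n m hc h
        rw [evaln_prec'] at h
        obtain ⟨hnk, hcase⟩ := h
        have e1 : encodeCode (Code.prec cf cg) =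
            Nat.pair (encodeCode cf) (encodeCode cg) + Nat.pair (encodeCode cf) (encodeCode cg) +
            (Nat.pair (encodeCode cf) (encodeCode cg) + Nat.pair (encodeCode cf) (encodeCode cg)) + 1+1+1+1+1 := by
          show (2 * (2 * Nat.pair (encodeCode cf) (encodeCode cg)) + 1) + 4 = _
          omega
        have hc' := hc
        rw [e1] at hc'
        obtain ⟨h15, hcf, hcg⟩ := keyPrec _ _ _ rfl hc'
        rw [← e1] at h15
        rcases hcase with ⟨hn2, hf⟩ | ⟨m₀, i, hn2, hrec, hgg⟩
        · have hpn : Nat.pair n.unpair.1 0 = n := by rw [← hn2, Nat.pair_unpair]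
          have hp5 : [x n.unpair.1, x 0, x n] ∈ J 7 := by
            have := hPair n.unpair.1 0
            rwa [hpn] at this
          exact (applyR (hs rEPrec0 (by simp [rules])) (by decide)
            (fun v => match v with | 0 => x (encodeCode (Code.prec cf cg)) | 1 => x (encodeCode cf) | 2 => x (encodeCode cg) | 3 => x k | 4 => x (k+1) | 5 => x n | 6 => x 0 | 7 => x n.unpair.1 | _ => x m)
            (fmc h15 (fmc (hxS k) (fmc (hLe n k hnk) (fmc hZ0
              (fmc hp5 (fmc (IHf n.unpair.1 m hcf hf) fm0))))))) _
            (List.mem_cons_self)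
        · have hpn : Nat.pair n.unpair.1 (m₀+1) = n := by rw [← hn2, Nat.pair_unpair]
          have hp5 : [x n.unpair.1, x (m₀+1), x n] ∈ J 7 := by
            have := hPair n.unpair.1 (m₀+1)
            rwa [hpn] at this
          exact (applyR (hs rEPrec1 (by simp [rules])) (by decide)
            (fun v => match v with | 0 => x (encodeCode (Code.prec cf cg)) | 1 => x (encodeCode cf) | 2 => x (encodeCode cg) | 3 => x k | 4 => x (k+1) | 5 => x n | 6 => x m₀ | 7 => x (m₀+1) | 8 => x n.unpair.1 | 9 => x (Nat.pair n.unpair.1 m₀) | 10 => x i | 11 => x (Nat.pair m₀ i) | 12 => x (Nat.pair n.unpair.1 (Nat.pair m₀ i)) | _ => x m)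
            (fmc h15 (fmc (hxS k) (fmc (hLe n k hnk) (fmc (hxS m₀)
              (fmc hp5 (fmc (hPair n.unpair.1 m₀)
                (fmc (IHk (Code.prec cf cg) (Nat.pair n.unpair.1 m₀) i hc hrec)
                  (fmc (hPair m₀ i) (fmc (hPair n.unpair.1 (Nat.pair m₀ i))
                    (fmc (IHg (Nat.pair n.unpair.1 (Nat.pair m₀ i)) m hcg hgg) fm0))))))))))) _
            (List.mem_cons_self)
      | rfind' cf IHf =>
        intro n m hc h
        rw [evaln_rfind''] at h
        obtain ⟨hnk, v, hv, hcase⟩ := h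
        have e1 : encodeCode (Code.rfind' cf) =
            encodeCode cf + encodeCode cf + (encodeCode cf + encodeCode cf) + 1+1+1+1+1+1+1 := by
          show (2 * (2 * encodeCode cf + 1) + 1) + 4 = _
          omega
        have hc' := hc
        rw [e1] at hc'
        obtain ⟨h16, hcf⟩ := keyRfind _ hc'
        rw [← e1] at h16
        have hup : [x n.unpair.1, x n.unpair.2, x n] ∈ J 7 := by
          have := hPair n.unpair.1 n.unpair.2
          rwa [Nat.pair_unpair] at this
        rcases hcase with ⟨rfl, rfl⟩ | ⟨h0, hrec⟩
        · exact (applyR (hs rERf0 (by simp [rules])) (by decide)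
            (fun v => match v with | 0 => x (encodeCode (Code.rfind' cf)) | 1 => x (encodeCode cf) | 3 => x k | 4 => x (k+1) | 5 => x n | 6 => x 0 | 7 => x n.unpair.1 | _ => x n.unpair.2)
            (fmc h16 (fmc (hxS k) (fmc (hLe n k hnk) (fmc hZ0
              (fmc (IHf n 0 hcf hv) (fmc hup fm0))))))) _
            (List.mem_cons_self)
        · obtain ⟨w, rfl⟩ : ∃ w, v = w + 1 := ⟨v - 1, by omega⟩
          exact (applyR (hs rERf1 (by simp [rules])) (by decide)
            (fun u => match u with | 0 => x (encodeCode (Code.rfind' cf)) | 1 => x (encodeCode cf) | 3 => x k | 4 => x (k+1) | 5 => x n | 6 => x w | 7 => x (w+1) | 8 => x n.unpair.1 | 9 => x n.unpair.2 | 10 => x (n.unpair.2+1) | 11 => x (Nat.pair n.unpair.1 (n.unpair.2+1)) | _ => x m)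
            (fmc h16 (fmc (hxS k) (fmc (hLe n k hnk) (fmc (hxS w)
              (fmc (IHf n (w+1) hcf hv) (fmc hup (fmc (hxS n.unpair.2)
                (fmc (hPair n.unpair.1 (n.unpair.2+1))
                  (fmc (IHk (Code.rfind' cf) (Nat.pair n.unpair.1 (n.unpair.2+1)) m hc hrec)
                    fm0)))))))))) _
            (List.mem_cons_self)
  obtain ⟨y, hy⟩ := Part.dom_iff_mem.1 hd
  obtain ⟨k, hk⟩ := evaln_complete.1 hy
  have hk' : evaln k cd 0 = some y := Option.mem_def.1 hk
  have hEfact := hE k cd 0 y hCdTop hk'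
  have hT' : [x (encodeCode cd)] ∈ J 17 := by rw [hxlit _ le_rfl]; exact hTJ
  exact (applyR (hs rH (by simp [rules])) (by decide)
    (fun v => match v with | 0 => x (encodeCode cd) | 1 => x 0 | 2 => x k | _ => x y)
    (fmc hT' (fmc hZ0 (fmc hEfact fm0)))) _ (List.mem_cons_self)

end Und

namespace Und
open Nat.Partrec Code Denumerable

abbrev dec (n : ℕ) : Code := ofNat Code n

lemma enc_dec (n : ℕ) : encodeCode (dec n) = n := by
  rw [← encodeCode_eq]; exact Denumerable.encode_ofNat n

lemma dec_enc (c : Code) : dec (encodeCode c) = c := by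
  rw [← encodeCode_eq]; exact Denumerable.ofNat_encode c

lemma dec_inj_eq {n : ℕ} {c : Code} (h : encodeCode c = n) : dec n = c := by
  rw [← h, dec_enc]

lemma dec_pair (f g : ℕ) : dec (2 * (2 * Nat.pair f g) + 4) = Code.pair (dec f) (dec g) :=
  dec_inj_eq (by simp [encodeCode, enc_dec])

lemma dec_comp (f g : ℕ) : dec (2 * (2 * Nat.pair f g + 1) + 4) = Code.comp (dec f) (dec g) :=
  dec_inj_eq (by simp [encodeCode, enc_dec])

lemma dec_prec (f g : ℕ) : dec ((2 * (2 * Nat.pair f g) + 1) + 4) = Code.prec (dec f) (dec g) :=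
  dec_inj_eq (by simp [encodeCode, enc_dec])

lemma dec_rfind (f : ℕ) : dec ((2 * (2 * f + 1) + 1) + 4) = Code.rfind' (dec f) :=
  dec_inj_eq (by simp [encodeCode, enc_dec])

lemma dec_zero : dec 0 = Code.zero := dec_inj_eq rfl
lemma dec_one : dec 1 = Code.succ := dec_inj_eq rfl
lemma dec_two : dec 2 = Code.left := dec_inj_eq rfl
lemma dec_three : dec 3 = Code.right := dec_inj_eq rfl

/-- The standard (minimal) model for the non-halting case. -/
def Mdl (cd : Code) : Instance := fun R =>
  match R with
  | 0 => {l | l = [0]}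
  | 1 => {l | ∃ a, l = [a, a+1]}
  | 2 => {l | ∃ a, l = [a]}
  | 3 => {l | ∃ a b, a ≤ b ∧ l = [a, b]}
  | 4 => {l | ∃ a b, a < b ∧ l = [a, b]}
  | 5 => {l | ∃ a b, l = [a, b, a+b]}
  | 6 => {l | ∃ a b, l = [a, b, a*b]}
  | 7 => {l | ∃ a b, l = [a, b, Nat.pair a b]}
  | 8 => {l | ∃ a, l = [a]}
  | 9 => {l | l = [0]}
  | 10 => {l | l = [1]}
  | 11 => {l | l = [2]}
  | 12 => {l | l = [3]}
  | 13 => {l | ∃ f g, l = [2*(2*Nat.pair f g)+4, f, g]}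
  | 14 => {l | ∃ f g, l = [2*(2*Nat.pair f g+1)+4, f, g]}
  | 15 => {l | ∃ f g, l = [(2*(2*Nat.pair f g)+1)+4, f, g]}
  | 16 => {l | ∃ f, l = [(2*(2*f+1)+1)+4, f]}
  | 17 => {l | l = [encodeCode cd]}
  | 18 => {l | ∃ k e n m, l = [k, e, n, m] ∧ evaln k (dec e) n = some m}
  | _ => ∅

lemma satFull {J : Instance} {t : TGD}
    (h : ∀ ν : Var → Val, (∀ a ∈ t.body, holdsAtom J ν a) → ∀ a ∈ t.head, holdsAtom J ν a) :
    satTGD J t :=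
  fun ν hb => ⟨ν, fun _ _ => rfl, h ν hb⟩

end Und

namespace Und
open Nat.Partrec Code Denumerable

section extract
variable {cd : Code} {a b c d : ℕ}

lemma memZ (h : [a] ∈ Mdl cd 0) : a = 0 := by
  have hx : [a] = [0] := h; injection hx
lemma memS (h : [a,b] ∈ Mdl cd 1) : b = a + 1 := by
  obtain ⟨x, hx⟩ := h
  injection hx with h1 hr; injection hr with h2
  subst h1; exact h2
lemma memLe (h : [a,b] ∈ Mdl cd 3) : a ≤ b := by
  obtain ⟨x, y, hxy, hx⟩ := h
  injection hx with h1 hr; injection hr with h2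
  subst h1; subst h2; exact hxy
lemma memLt (h : [a,b] ∈ Mdl cd 4) : a < b := by
  obtain ⟨x, y, hxy, hx⟩ := h
  injection hx with h1 hr; injection hr with h2
  subst h1; subst h2; exact hxy
lemma memAdd (h : [a,b,c] ∈ Mdl cd 5) : c = a + b := by
  obtain ⟨x, y, hx⟩ := h
  injection hx with h1 hr; injection hr with h2 hr2; injection hr2 with h3
  subst h1; subst h2; exact h3
lemma memMul (h : [a,b,c] ∈ Mdl cd 6) : c = a * b := by
  obtain ⟨x, y, hx⟩ := h
  injection hx with h1 hr; injection hr with h2 hr2; injection hr2 with h3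
  subst h1; subst h2; exact h3
lemma memPair (h : [a,b,c] ∈ Mdl cd 7) : c = Nat.pair a b := by
  obtain ⟨x, y, hx⟩ := h
  injection hx with h1 hr; injection hr with h2 hr2; injection hr2 with h3
  subst h1; subst h2; exact h3
lemma memC0 (h : [a] ∈ Mdl cd 9) : a = 0 := by
  have hx : [a] = [0] := h; injection hx
lemma memC1 (h : [a] ∈ Mdl cd 10) : a = 1 := by
  have hx : [a] = [1] := h; injection hx
lemma memC2 (h : [a] ∈ Mdl cd 11) : a = 2 := by
  have hx : [a] = [2] := h; injection hx
lemma memC3 (h : [a] ∈ Mdl cd 12) : a = 3 := by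
  have hx : [a] = [3] := h; injection hx
lemma memCPair (h : [a,b,c] ∈ Mdl cd 13) : a = 2*(2*Nat.pair b c)+4 := by
  obtain ⟨x, y, hx⟩ := h
  injection hx with h1 hr; injection hr with h2 hr2; injection hr2 with h3
  subst h2; subst h3; exact h1
lemma memCComp (h : [a,b,c] ∈ Mdl cd 14) : a = 2*(2*Nat.pair b c+1)+4 := by
  obtain ⟨x, y, hx⟩ := h
  injection hx with h1 hr; injection hr with h2 hr2; injection hr2 with h3
  subst h2; subst h3; exact h1
lemma memCPrec (h : [a,b,c] ∈ Mdl cd 15) : a = (2*(2*Nat.pair b c)+1)+4 := by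
  obtain ⟨x, y, hx⟩ := h
  injection hx with h1 hr; injection hr with h2 hr2; injection hr2 with h3
  subst h2; subst h3; exact h1
lemma memCRfind (h : [a,b] ∈ Mdl cd 16) : a = (2*(2*b+1)+1)+4 := by
  obtain ⟨x, hx⟩ := h
  injection hx with h1 hr; injection hr with h2
  subst h2; exact h1
lemma memCTop (h : [a] ∈ Mdl cd 17) : a = encodeCode cd := by
  have hx : [a] = [encodeCode cd] := h; injection hx
lemma memE (h : [a,b,c,d] ∈ Mdl cd 18) : evaln a (dec b) c = some d := by
  obtain ⟨k, e, n, m, heq, hev⟩ := h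
  injection heq with h1 hr; injection hr with h2 hr2; injection hr2 with h3 hr3
  injection hr3 with h4
  subst h1; subst h2; subst h3; subst h4; exact hev
lemma memE' (h : evaln a (dec b) c = some d) : [a,b,c,d] ∈ Mdl cd 18 :=
  ⟨a, b, c, d, rfl, h⟩
lemma memN' : [a] ∈ Mdl cd 2 := ⟨a, rfl⟩
lemma memCd' : [a] ∈ Mdl cd 8 := ⟨a, rfl⟩
lemma memS' (h : b = a + 1) : [a, b] ∈ Mdl cd 1 := ⟨a, by rw [h]⟩
lemma memLe' (h : a ≤ b) : [a, b] ∈ Mdl cd 3 := ⟨a, b, h, rfl⟩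
lemma memLt' (h : a < b) : [a, b] ∈ Mdl cd 4 := ⟨a, b, h, rfl⟩
lemma memAdd' (h : c = a + b) : [a, b, c] ∈ Mdl cd 5 := ⟨a, b, by rw [h]⟩
lemma memMul' (h : c = a * b) : [a, b, c] ∈ Mdl cd 6 := ⟨a, b, by rw [h]⟩
lemma memPair' (h : c = Nat.pair a b) : [a, b, c] ∈ Mdl cd 7 := ⟨a, b, by rw [h]⟩
lemma memCPair' (h : a = 2*(2*Nat.pair b c)+4) : [a,b,c] ∈ Mdl cd 13 := ⟨b, c, by rw [h]⟩
lemma memCComp' (h : a = 2*(2*Nat.pair b c+1)+4) : [a,b,c] ∈ Mdl cd 14 := ⟨b, c, by rw [h]⟩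
lemma memCPrec' (h : a = (2*(2*Nat.pair b c)+1)+4) : [a,b,c] ∈ Mdl cd 15 := ⟨b, c, by rw [h]⟩
lemma memCRfind' (h : a = (2*(2*b+1)+1)+4) : [a,b] ∈ Mdl cd 16 := ⟨b, by rw [h]⟩

end extract

end Und

namespace Und
open Nat.Partrec Code Denumerable

section mems
variable {α : Type} {a b c d e f g h i j k : α} {l : List α}
lemma m0 : a ∈ a :: l := List.mem_cons_self
lemma m1 : a ∈ b :: a :: l := List.mem_cons_of_mem _ m0
lemma m2 : a ∈ b :: c :: a :: l := List.mem_cons_of_mem _ m1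
lemma m3 : a ∈ b :: c :: d :: a :: l := List.mem_cons_of_mem _ m2
lemma m4 : a ∈ b :: c :: d :: e :: a :: l := List.mem_cons_of_mem _ m3
lemma m5 : a ∈ b :: c :: d :: e :: f :: a :: l := List.mem_cons_of_mem _ m4
lemma m6 : a ∈ b :: c :: d :: e :: f :: g :: a :: l := List.mem_cons_of_mem _ m5
lemma m7 : a ∈ b :: c :: d :: e :: f :: g :: h :: a :: l := List.mem_cons_of_mem _ m6
lemma m8 : a ∈ b :: c :: d :: e :: f :: g :: h :: i :: a :: l := List.mem_cons_of_mem _ m7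
lemma m9 : a ∈ b :: c :: d :: e :: f :: g :: h :: i :: j :: a :: l := List.mem_cons_of_mem _ m8
lemma m10 : a ∈ b :: c :: d :: e :: f :: g :: h :: i :: j :: k :: a :: l := List.mem_cons_of_mem _ m9
end mems

theorem modelSat (cd : Code) (hnd : ¬ (eval cd 0).Dom) :
    ∀ t ∈ rules, satTGD (Mdl cd) t := by
  have sN0 : satTGD (Mdl cd) rN0 := satFull fun ν hb => fmc memN' fm0
  have sN1 : satTGD (Mdl cd) rN1 := satFull fun ν hb => fmc memN' (fmc memN' fm0)
  have sS : satTGD (Mdl cd) rS := fun ν hb => by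
    refine ⟨fun v => if v = 1 then ν 0 + 1 else ν v, ?_, ?_⟩
    · intro v hv
      obtain ⟨a, ha, hva⟩ := hv
      simp only [rS, A, List.mem_cons, List.not_mem_nil, or_false] at ha
      subst ha
      simp only [List.mem_cons, List.not_mem_nil, or_false] at hva
      subst hva
      simp
    · exact fmc (memS' rfl) (fmc memN' fm0)
  have sLt0 : satTGD (Mdl cd) rLt0 := satFull fun ν hb => by
    have h1 := memS (hb _ m0)
    exact fmc (memLt' (by omega)) fm0
  have sLt1 : satTGD (Mdl cd) rLt1 := satFull fun ν hb => by
    have h1 := memLt (hb _ m0)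
    have h2 := memS (hb _ m1)
    exact fmc (memLt' (by omega)) fm0
  have sLe0 : satTGD (Mdl cd) rLe0 := satFull fun ν hb =>
    fmc (memLe' le_rfl) fm0
  have sLe1 : satTGD (Mdl cd) rLe1 := satFull fun ν hb => by
    have h1 := memLt (hb _ m0)
    exact fmc (memLe' (le_of_lt h1)) fm0
  have sAdd0 : satTGD (Mdl cd) rAdd0 := satFull fun ν hb => by
    have h1 := memZ (hb _ m1)
    exact fmc (memAdd' (by omega)) fm0
  have sAdd1 : satTGD (Mdl cd) rAdd1 := satFull fun ν hb => by
    have h1 := memAdd (hb _ m0)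
    have h2 := memS (hb _ m1)
    have h3 := memS (hb _ m2)
    exact fmc (memAdd' (by omega)) fm0
  have sMul0 : satTGD (Mdl cd) rMul0 := satFull fun ν hb => by
    have h1 := memZ (hb _ m1)
    exact fmc (memMul' (by rw [h1]; simp)) fm0
  have sMul1 : satTGD (Mdl cd) rMul1 := satFull fun ν hb => by
    have h1 := memMul (hb _ m0)
    have h2 := memS (hb _ m1)
    have h3 := memAdd (hb _ m2)
    exact fmc (memMul' (by rw [h3, h1, h2, Nat.mul_succ])) fm0
  have sPairLt : satTGD (Mdl cd) rPairLt := satFull fun ν hb => by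
    have h1 := memLt (hb _ m0)
    have h2 := memMul (hb _ m1)
    have h3 := memAdd (hb _ m2)
    refine fmc (memPair' ?_) fm0
    rw [h3, h2]
    unfold Nat.pair
    rw [if_pos h1]
  have sPairGe : satTGD (Mdl cd) rPairGe := satFull fun ν hb => by
    have h1 := memLe (hb _ m0)
    have h2 := memMul (hb _ m1)
    have h3 := memAdd (hb _ m2)
    have h4 := memAdd (hb _ m3)
    refine fmc (memPair' ?_) fm0
    rw [h4, h3, h2]
    unfold Nat.pair
    rw [if_neg (not_lt.2 h1)]
  have sTop : satTGD (Mdl cd) rTop := satFull fun ν hb => fmc memCd' fm0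
  have sC0 : satTGD (Mdl cd) rC0 := satFull fun ν hb => by
    have h1 := memZ (hb _ m1)
    exact fmc (show ([ν 0] : List Val) = [0] by rw [h1]) fm0
  have sC1 : satTGD (Mdl cd) rC1 := satFull fun ν hb => by
    have h1 := memZ (hb _ m1)
    have h2 := memS (hb _ m2)
    exact fmc (show ([ν 0] : List Val) = [1] by rw [h2, h1]) fm0
  have sC2 : satTGD (Mdl cd) rC2 := satFull fun ν hb => by
    have h1 := memZ (hb _ m1)
    have h2 := memS (hb _ m2)
    have h3 := memS (hb _ m3)
    exact fmc (show ([ν 0] : List Val) = [2] by rw [h3, h2, h1]) fm0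
  have sC3 : satTGD (Mdl cd) rC3 := satFull fun ν hb => by
    have h1 := memZ (hb _ m1)
    have h2 := memS (hb _ m2)
    have h3 := memS (hb _ m3)
    have h4 := memS (hb _ m4)
    exact fmc (show ([ν 0] : List Val) = [3] by rw [h4, h3, h2, h1]) fm0
  have sDPair : satTGD (Mdl cd) rDPair := satFull fun ν hb => by
    have h1 := memPair (hb _ m1)
    have h2 := memAdd (hb _ m2)
    have h3 := memAdd (hb _ m3)
    have h4 := memS (hb _ m4)
    have h5 := memS (hb _ m5)
    have h6 := memS (hb _ m6)
    have h7 := memS (hb _ m7)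
    refine fmc (memCPair' ?_) (fmc memCd' (fmc memCd' fm0))
    rw [← h1]; omega
  have sDComp : satTGD (Mdl cd) rDComp := satFull fun ν hb => by
    have h1 := memPair (hb _ m1)
    have h2 := memAdd (hb _ m2)
    have h3 := memAdd (hb _ m3)
    have h4 := memS (hb _ m4)
    have h5 := memS (hb _ m5)
    have h6 := memS (hb _ m6)
    have h7 := memS (hb _ m7)
    have h8 := memS (hb _ m8)
    have h9 := memS (hb _ m9)
    refine fmc (memCComp' ?_) (fmc memCd' (fmc memCd' fm0))
    rw [← h1]; omega
  have sDPrec : satTGD (Mdl cd) rDPrec := satFull fun ν hb => by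
    have h1 := memPair (hb _ m1)
    have h2 := memAdd (hb _ m2)
    have h3 := memAdd (hb _ m3)
    have h4 := memS (hb _ m4)
    have h5 := memS (hb _ m5)
    have h6 := memS (hb _ m6)
    have h7 := memS (hb _ m7)
    have h8 := memS (hb _ m8)
    refine fmc (memCPrec' ?_) (fmc memCd' (fmc memCd' fm0))
    rw [← h1]; omega
  have sDRfind : satTGD (Mdl cd) rDRfind := satFull fun ν hb => by
    have h2 := memAdd (hb _ m2)
    have h3 := memAdd (hb _ m3)
    have h4 := memS (hb _ m4)
    have h5 := memS (hb _ m5)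
    have h6 := memS (hb _ m6)
    have h7 := memS (hb _ m7)
    have h8 := memS (hb _ m8)
    have h9 := memS (hb _ m9)
    have h10 := memS (hb _ m10)
    refine fmc (memCRfind' ?_) (fmc memCd' fm0)
    omega
  have sEZero : satTGD (Mdl cd) rEZero := satFull fun ν hb => by
    have h0 := memC0 (hb _ m0)
    have h1 := memS (hb _ m1)
    have h2 := memLe (hb _ m2)
    have h3 := memZ (hb _ m3)
    refine fmc (memE' ?_) fm0
    rw [h0, dec_zero, h1, h3]
    exact (evaln_zero' _ _ _).mpr ⟨h2, rfl⟩
  have sESucc : satTGD (Mdl cd) rESucc := satFull fun ν hb => by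
    have h0 := memC1 (hb _ m0)
    have h1 := memS (hb _ m1)
    have h2 := memLe (hb _ m2)
    have h3 := memS (hb _ m3)
    refine fmc (memE' ?_) fm0
    rw [h0, dec_one, h1, h3]
    exact (evaln_succ' _ _ _).mpr ⟨h2, rfl⟩
  have sELeft : satTGD (Mdl cd) rELeft := satFull fun ν hb => by
    have h0 := memC2 (hb _ m0)
    have h1 := memS (hb _ m1)
    have h2 := memLe (hb _ m2)
    have h3 := memPair (hb _ m3)
    refine fmc (memE' ?_) fm0
    rw [h0, dec_two, h1]
    refine (evaln_left' _ _ _).mpr ⟨h2, ?_⟩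
    rw [h3, Nat.unpair_pair]
  have sERight : satTGD (Mdl cd) rERight := satFull fun ν hb => by
    have h0 := memC3 (hb _ m0)
    have h1 := memS (hb _ m1)
    have h2 := memLe (hb _ m2)
    have h3 := memPair (hb _ m3)
    refine fmc (memE' ?_) fm0
    rw [h0, dec_three, h1]
    refine (evaln_right' _ _ _).mpr ⟨h2, ?_⟩
    rw [h3, Nat.unpair_pair]
  have sEPair : satTGD (Mdl cd) rEPair := satFull fun ν hb => by
    have h0 := memCPair (hb _ m0)
    have h1 := memS (hb _ m1)
    have h2 := memLe (hb _ m2)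
    have e1 := memE (hb _ m3)
    have e2 := memE (hb _ m4)
    have h5 := memPair (hb _ m5)
    refine fmc (memE' ?_) fm0
    rw [h1] at e1 e2
    rw [h0, dec_pair, h1]
    exact (evaln_pair' _ _ _ _ _).mpr ⟨h2, ν 6, ν 7, e1, e2, h5⟩
  have sEComp : satTGD (Mdl cd) rEComp := satFull fun ν hb => by
    have h0 := memCComp (hb _ m0)
    have h1 := memS (hb _ m1)
    have h2 := memLe (hb _ m2)
    have e1 := memE (hb _ m3)
    have e2 := memE (hb _ m4)
    refine fmc (memE' ?_) fm0
    rw [h1] at e1 e2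
    rw [h0, dec_comp, h1]
    exact (evaln_comp' _ _ _ _ _).mpr ⟨h2, ν 6, e1, e2⟩
  have sEPrec0 : satTGD (Mdl cd) rEPrec0 := satFull fun ν hb => by
    have h0 := memCPrec (hb _ m0)
    have h1 := memS (hb _ m1)
    have h2 := memLe (hb _ m2)
    have h3 := memZ (hb _ m3)
    have h4 := memPair (hb _ m4)
    have e1 := memE (hb _ m5)
    refine fmc (memE' ?_) fm0
    rw [h1] at e1
    rw [h0, dec_prec, h1]
    refine (evaln_prec' _ _ _ _ _).mpr ⟨h2, Or.inl ⟨?_, ?_⟩⟩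
    · rw [h4, Nat.unpair_pair, h3]
    · rw [h4, Nat.unpair_pair]
      exact e1
  have sEPrec1 : satTGD (Mdl cd) rEPrec1 := satFull fun ν hb => by
    have h0 := memCPrec (hb _ m0)
    have h1 := memS (hb _ m1)
    have h2 := memLe (hb _ m2)
    have h3 := memS (hb _ m3)
    have h4 := memPair (hb _ m4)
    have h5 := memPair (hb _ m5)
    have e0 := memE (hb _ m6)
    have h7 := memPair (hb _ m7)
    have h8 := memPair (hb _ m8)
    have e2 := memE (hb _ m9)
    refine fmc (memE' ?_) fm0
    rw [h0, dec_prec] at e0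
    rw [h1] at e2
    rw [h0, dec_prec, h1]
    refine (evaln_prec' _ _ _ _ _).mpr ⟨h2, Or.inr ⟨ν 6, ν 10, ?_, ?_, ?_⟩⟩
    · rw [h4, Nat.unpair_pair, h3]
    · rw [h4, Nat.unpair_pair, ← h5]
      exact e0
    · rw [h4, Nat.unpair_pair, ← h7, ← h8]
      exact e2
  have sERf0 : satTGD (Mdl cd) rERf0 := satFull fun ν hb => by
    have h0 := memCRfind (hb _ m0)
    have h1 := memS (hb _ m1)
    have h2 := memLe (hb _ m2)
    have h3 := memZ (hb _ m3)
    have e1 := memE (hb _ m4)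
    have h5 := memPair (hb _ m5)
    refine fmc (memE' ?_) fm0
    rw [h1, h3] at e1
    rw [h0, dec_rfind, h1]
    refine (evaln_rfind'' _ _ _ _).mpr ⟨h2, 0, e1, Or.inl ⟨rfl, ?_⟩⟩
    rw [h5, Nat.unpair_pair]
  have sERf1 : satTGD (Mdl cd) rERf1 := satFull fun ν hb => by
    have h0 := memCRfind (hb _ m0)
    have h1 := memS (hb _ m1)
    have h2 := memLe (hb _ m2)
    have h3 := memS (hb _ m3)
    have e1 := memE (hb _ m4)
    have h5 := memPair (hb _ m5)
    have h6 := memS (hb _ m6)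
    have h7 := memPair (hb _ m7)
    have e0 := memE (hb _ m8)
    refine fmc (memE' ?_) fm0
    rw [h0, dec_rfind] at e0
    rw [h1] at e1
    rw [h0, dec_rfind, h1]
    refine (evaln_rfind'' _ _ _ _).mpr ⟨h2, ν 7, e1, Or.inr ⟨by omega, ?_⟩⟩
    rw [h5, Nat.unpair_pair, ← h6, ← h7]
    exact e0
  have sH : satTGD (Mdl cd) rH := satFull fun ν hb => by
    have h0 := memCTop (hb _ m0)
    have h1 := memZ (hb _ m1)
    have e := memE (hb _ m2)
    rw [h0, dec_enc, h1] at e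
    exact (hnd (Part.dom_iff_mem.2 ⟨ν 3, evaln_sound (Option.mem_def.2 e)⟩)).elim
  intro t ht
  simp only [rules, List.mem_cons, List.not_mem_nil, or_false] at ht
  rcases ht with rfl|rfl|rfl|rfl|rfl|rfl|rfl|rfl|rfl|rfl|rfl|rfl|rfl|rfl|rfl|rfl|rfl|rfl|rfl|rfl|rfl|rfl|rfl|rfl|rfl|rfl|rfl|rfl|rfl|rfl|rfl|rfl|rfl
  exacts [sN0, sN1, sS, sLt0, sLt1, sLe0, sLe1, sAdd0, sAdd1, sMul0, sMul1, sPairLt,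
    sPairGe, sTop, sC0, sC1, sC2, sC3, sDPair, sDComp, sDPrec, sDRfind, sEZero, sESucc,
    sELeft, sERight, sEPair, sEComp, sEPrec0, sEPrec1, sERf0, sERf1, sH]

end Und

namespace Und
open Nat.Partrec Code Denumerable

theorem key (cd : Code) :
    (∀ J ∈ procOutcomes P1 (toInstance (encF (encodeCode cd))), ∀ t ∈ P2.pre, satTGD J t)
      ↔ (eval cd 0).Dom := by
  constructor
  · intro hall
    by_contra hnd
    have hmem : Mdl cd ∈ procOutcomes P1 (toInstance (encF (encodeCode cd))) := by
      refine ⟨fun t ht => absurd ht (List.not_mem_nil), modelSat cd hnd,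
        fun R hR => absurd (Set.mem_univ R) hR, ?_⟩
      intro q hq
      simp only [P1, List.mem_cons, List.not_mem_nil, or_false] at hq
      rcases hq with rfl | rfl | rfl
      · rintro l ⟨ν, hν, rfl⟩
        refine ⟨ν, ?_, rfl⟩
        refine fmc ?_ fm0
        have hfact : ((0:ℕ), [ν 0]) ∈ encF (encodeCode cd) := hν _ m0
        simp only [encF, List.mem_cons, List.mem_map, List.mem_range, Prod.mk.injEq] at hfact
        rcases hfact with ⟨-, h⟩ | ⟨h17, -⟩ | ⟨i, -, h1, -⟩
        · exact h
        · exact absurd h17 (by decide)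
        · exact absurd h1 (by decide)
      · rintro l ⟨ν, hν, rfl⟩
        refine ⟨ν, ?_, rfl⟩
        refine fmc ?_ fm0
        have hfact : ((1:ℕ), [ν 0, ν 1]) ∈ encF (encodeCode cd) := hν _ m0
        simp only [encF, List.mem_cons, List.mem_map, List.mem_range, Prod.mk.injEq] at hfact
        rcases hfact with ⟨h0, -⟩ | ⟨h17, -⟩ | ⟨i, -, -, h⟩
        · exact absurd h0 (by decide)
        · exact absurd h17 (by decide)
        · exact ⟨i, h.symm⟩
      · rintro l ⟨ν, hν, rfl⟩
        refine ⟨ν, ?_, rfl⟩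
        refine fmc ?_ fm0
        have hfact : ((17:ℕ), [ν 0]) ∈ encF (encodeCode cd) := hν _ m0
        simp only [encF, List.mem_cons, List.mem_map, List.mem_range, Prod.mk.injEq] at hfact
        rcases hfact with ⟨h0, -⟩ | ⟨-, h⟩ | ⟨i, -, h1, -⟩
        · exact absurd h0 (by decide)
        · exact h
        · exact absurd h1 (by decide)
    have hsat := hall _ hmem _ (List.mem_cons_self)
    obtain ⟨ν', -, hh⟩ := hsat (fun _ => 0) fm0
    exact hh _ (List.mem_cons_self)
  · intro hd J hJ t ht
    obtain rfl : t = ⟨[], [A 19 []]⟩ := by simpa [P2] using ht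
    obtain ⟨-, hpost, -, hpres⟩ := hJ
    have hZJ : [(0:Val)] ∈ J 0 := by
      have h := hpres qZ m0 (show ([0]:List Val) ∈ answers qZ (toInstance (encF (encodeCode cd)))
        from ⟨fun _ => 0, fmc (List.mem_cons_self) fm0, rfl⟩)
      obtain ⟨ν, hν, heq⟩ := h
      have h1 : (0:Val) = ν 0 := by injection heq
      have hfact : [ν 0] ∈ J 0 := hν _ m0
      rwa [← h1] at hfact
    have hSJ : ∀ i, i < encodeCode cd → [(i:Val), i+1] ∈ J 1 := by
      intro i hi
      have hfI : ((1:ℕ), [(i:Val), i+1]) ∈ encF (encodeCode cd) :=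
        List.mem_cons_of_mem _ (List.mem_cons_of_mem _
          (List.mem_map.2 ⟨i, List.mem_range.2 hi, rfl⟩))
      have h := hpres qS m1 (show ([i, i+1]:List Val) ∈ answers qS (toInstance (encF (encodeCode cd)))
        from ⟨fun v => if v = 0 then i else i+1, fmc hfI fm0, rfl⟩)
      obtain ⟨ν, hν, heq⟩ := h
      have h1 : (i:Val) = ν 0 := by injection heq
      have h2 : (i+1:Val) = ν 1 := by
        have := heq
        injection this with _ hr
        injection hr
      have hfact : [ν 0, ν 1] ∈ J 1 := hν _ m0
      rwa [← h1, ← h2] at hfact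
    have hTJ : [(encodeCode cd : Val)] ∈ J 17 := by
      have hfI : ((17:ℕ), [(encodeCode cd : Val)]) ∈ encF (encodeCode cd) :=
        List.mem_cons_of_mem _ (List.mem_cons_self)
      have h := hpres qT m2
        (show ([encodeCode cd]:List Val) ∈ answers qT (toInstance (encF (encodeCode cd)))
          from ⟨fun _ => encodeCode cd, fmc hfI fm0, rfl⟩)
      obtain ⟨ν, hν, heq⟩ := h
      have h1 : (encodeCode cd : Val) = ν 0 := by injection heq
      have hfact : [ν 0] ∈ J 17 := hν _ m0
      rwa [← h1] at hfact
    intro ν _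
    refine ⟨ν, fun v hv => rfl, ?_⟩
    refine fmc ?_ fm0
    exact sound cd J hZJ hSJ hTJ hpost hd

lemma encF_primrec : Primrec encF := by
  have hlist : Primrec fun i : ℕ => [i, i+1] :=
    Primrec₂.comp Primrec.list_cons Primrec.id
      (Primrec₂.comp Primrec.list_cons Primrec.succ (Primrec.const []))
  have hpair : Primrec fun i : ℕ => ((1:ℕ), [i, i+1]) := (Primrec.const 1).pair hlist
  have h1 : Primrec fun n : ℕ => (List.range n).map (fun i => ((1:ℕ), [i, i+1])) :=
    Primrec.list_map Primrec.list_range (hpair.comp Primrec.snd)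
  have h17 : Primrec fun n : ℕ => ((17:ℕ), [n]) :=
    (Primrec.const 17).pair (Primrec₂.comp Primrec.list_cons Primrec.id (Primrec.const []))
  exact Primrec₂.comp Primrec.list_cons (Primrec.const ((0:ℕ), [(0:ℕ)]))
    (Primrec₂.comp Primrec.list_cons h17 h1)

end Und

/-- Applicability is undecidable: there are two fixed procedures `P₁`, `P₂`
with tgd pre- and postconditions such that no algorithm decides, given a finite
instance `I`, whether every instance in `outcomes_{P₁}(I)` satisfies the
precondition tgds of `P₂`. -/
theorem applicability_undecidable :
    ∃ P₁ P₂ : Proc,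
      ¬ ComputablePred (fun L : FinInst =>
          ∀ J ∈ procOutcomes P₁ (toInstance L), ∀ t ∈ P₂.pre, satTGD J t) := by
  refine ⟨Und.P1, Und.P2, fun hC => ?_⟩
  apply ComputablePred.halting_problem 0
  obtain ⟨f, hf, hpf⟩ := ComputablePred.computable_iff.1 hC
  refine ComputablePred.computable_iff.2
    ⟨fun c => f (Und.encF (Encodable.encode c)), hf.comp (Und.encF_primrec.to_comp.comp Computable.encode), ?_⟩
  funext c
  have h1 := congrFun hpf (Und.encF (Encodable.encode c))
  rw [← h1]
  rw [Nat.Partrec.Code.encodeCode_eq]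
  exact propext (Und.key c).symm
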